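/- The forward-backward envelope φ_Γ is level bounded (i.e., every sublevel set {x : φ_Γ(x) ≤ α} is bounded) if and only if Φ is level bounded. -/

import Mathlib

open Filter Topology Metric Bornology Set
open scoped RealInnerProductSpace

noncomputable section

variable {N : ℕ} {E : Fin N → Type*}
  [∀ i, NormedAddCommGroup (E i)] [∀ i, InnerProductSpace ℝ (E i)]
  [∀ i, CompleteSpace (E i)]

/-- `F(x) = (1/N) ∑ᵢ fᵢ(xᵢ)`, the smooth separable part of the cost. -/
def Fsum (f : ∀ i, E i → ℝ) (x : PiLp 2 E) : ℝ := (N : ℝ)⁻¹ * ∑ i, f i (x i)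

/-- `Φ = F + G`, the total cost, extended-real-valued. -/
def Phi (f : ∀ i, E i → ℝ) (G : PiLp 2 E → EReal) (x : PiLp 2 E) : EReal :=
  ((Fsum f x : ℝ) : EReal) + G x

/-- The model `M(w,x) = F(x) + ⟨∇F(x),w-x⟩ + G(w) + ½‖w-x‖²_{Γ⁻¹}`, where `∇F(x)ᵢ = f'ᵢ(xᵢ)/N`
and `Γ = blockdiag(γ₁ I, …, γ_N I)`. -/
def Mdl (f : ∀ i, E i → ℝ) (f' : ∀ i, E i → E i) (γ : Fin N → ℝ)
    (G : PiLp 2 E → EReal) (w x : PiLp 2 E) : EReal :=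
  ((Fsum f x + (N : ℝ)⁻¹ * ∑ i, ⟪f' i (x i), w i - x i⟫
      + 2⁻¹ * ∑ i, (γ i)⁻¹ * ‖w i - x i‖ ^ 2 : ℝ) : EReal) + G w

/-- The forward-backward operator `T(x) = argmin_w M(w,x)`. -/
def Tmap (f : ∀ i, E i → ℝ) (f' : ∀ i, E i → E i) (γ : Fin N → ℝ)
    (G : PiLp 2 E → EReal) (x : PiLp 2 E) : Set (PiLp 2 E) :=
  {z | ∀ w, Mdl f f' γ G z x ≤ Mdl f f' γ G w x}

/-- The `Γ⁻¹`-proximal mapping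
`prox_G^{Γ⁻¹}(u) = argmin_w { G(w) + ½‖w-u‖²_{Γ⁻¹} }`. -/
def proxSet (γ : Fin N → ℝ) (G : PiLp 2 E → EReal) (u : PiLp 2 E) : Set (PiLp 2 E) :=
  {z | ∀ w, G z + ((2⁻¹ * ∑ i, (γ i)⁻¹ * ‖z i - u i‖ ^ 2 : ℝ) : EReal)
        ≤ G w + ((2⁻¹ * ∑ i, (γ i)⁻¹ * ‖w i - u i‖ ^ 2 : ℝ) : EReal)}

/-- The forward (gradient) step `x - Γ∇F(x)`. -/
def fwd (f' : ∀ i, E i → E i) (γ : Fin N → ℝ) (x : PiLp 2 E) : PiLp 2 E :=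
  WithLp.toLp 2 (fun i => x i - (γ i * (N : ℝ)⁻¹) • f' i (x i))

/-- Convexity for an extended-real-valued function. -/
def ERealConvex {X : Type*} [AddCommMonoid X] [Module ℝ X] (G : X → EReal) : Prop :=
  ∀ x y : X, ∀ a b : ℝ, 0 ≤ a → 0 ≤ b → a + b = 1 →
    G (a • x + b • y) ≤ (a : ℝ) * G x + (b : ℝ) * G y

/-- The regular (Fréchet) subdifferential `∂̂h(x)` of an extended-real-valued function. -/
def frechetSubdiff {X : Type*} [NormedAddCommGroup X] [InnerProductSpace ℝ X]
    (h : X → EReal) (x : X) : Set X :=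
  {v | h x ≠ ⊤ ∧ h x ≠ ⊥ ∧ ∀ ε : ℝ, 0 < ε →
      ∀ᶠ w in 𝓝 x, h x + ((⟪v, w - x⟫ - ε * ‖w - x‖ : ℝ) : EReal) ≤ h w}

/-- The limiting subdifferential `∂h(x)`. -/
def limitingSubdiff {X : Type*} [NormedAddCommGroup X] [InnerProductSpace ℝ X]
    (h : X → EReal) (x : X) : Set X :=
  {v | ∃ u w : ℕ → X, (∀ k, w k ∈ frechetSubdiff h (u k)) ∧
      Tendsto u atTop (𝓝 x) ∧ Tendsto (fun k => h (u k)) atTop (𝓝 (h x)) ∧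
      Tendsto w atTop (𝓝 v)}

/-- The Kurdyka-Łojasiewicz property with exponent `θ` (at every point of `dom ∂h`),
with desingularizing function `ψ(s) = ϱ s^{1-θ}`. -/
def HasKLExponent {X : Type*} [NormedAddCommGroup X] [InnerProductSpace ℝ X]
    (h : X → EReal) (θ : ℝ) : Prop :=
  ∀ xb : X, (limitingSubdiff h xb).Nonempty →
    ∃ ε η ϱ : ℝ, 0 < ε ∧ 0 < η ∧ 0 < ϱ ∧
      ∀ w : X, ‖w - xb‖ < ε → h xb < h w → h w < h xb + ((η : ℝ) : EReal) →
        ∀ v ∈ limitingSubdiff h w,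
          1 ≤ ϱ * (1 - θ) * (h w - h xb).toReal ^ (-θ) * ‖v‖

/-- Descent lemma: an `L`-smooth function admits a quadratic upper bound. -/
lemma descent_lemma {X : Type*} [NormedAddCommGroup X] [InnerProductSpace ℝ X] [CompleteSpace X]
    (f : X → ℝ) (g : X → X) (L : ℝ) (hL : 0 ≤ L)
    (hf : ∀ u, HasGradientAt f (g u) u)
    (hlip : ∀ u v, ‖g u - g v‖ ≤ L * ‖u - v‖)
    (x w : X) :
    f w ≤ f x + ⟪g x, w - x⟫ + L / 2 * ‖w - x‖ ^ 2 := by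
  set d := w - x with hd
  set ψ : ℝ → ℝ := fun t => f (x + t • d) - t * ⟪g x, d⟫ - L / 2 * t ^ 2 * ‖d‖ ^ 2 with hψ
  have hcurve : ∀ t : ℝ, HasDerivAt (fun s : ℝ => x + s • d) d t := by
    intro t
    simpa using ((hasDerivAt_id t).smul_const d).const_add x
  have hderiv : ∀ t : ℝ, HasDerivAt ψ
      (⟪g (x + t • d), d⟫ - ⟪g x, d⟫ - L * t * ‖d‖ ^ 2) t := by
    intro t
    have h1 : HasDerivAt (fun s : ℝ => f (x + s • d)) ⟪g (x + t • d), d⟫ t := by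
      have := ((hf (x + t • d)).hasFDerivAt).comp_hasDerivAt t (hcurve t)
      exact this
    have h2 : HasDerivAt (fun s : ℝ => s * ⟪g x, d⟫) ⟪g x, d⟫ t := by
      simpa using (hasDerivAt_id t).mul_const (⟪g x, d⟫)
    have h3 : HasDerivAt (fun s : ℝ => L / 2 * s ^ 2 * ‖d‖ ^ 2) (L * t * ‖d‖ ^ 2) t := by
      have h4 : HasDerivAt (fun s : ℝ => s ^ 2) (2 * t) t := by
        simpa using hasDerivAt_pow 2 t
      have := (h4.const_mul (L / 2)).mul_const (‖d‖ ^ 2)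
      rw [show L * t * ‖d‖ ^ 2 = L / 2 * (2 * t) * ‖d‖ ^ 2 by ring]; exact this
    exact (h1.sub h2).sub h3
  have hmono : AntitoneOn ψ (Set.Icc (0:ℝ) 1) := by
    apply antitoneOn_of_deriv_nonpos (convex_Icc 0 1)
    · exact fun t _ => (hderiv t).continuousAt.continuousWithinAt
    · exact fun t _ => (hderiv t).differentiableAt.differentiableWithinAt
    · intro t ht
      rw [(hderiv t).deriv]
      rw [interior_Icc] at ht
      have h4 : ⟪g (x + t • d), d⟫ - ⟪g x, d⟫ ≤ L * t * ‖d‖ ^ 2 := by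
        rw [← inner_sub_left]
        calc ⟪g (x + t • d) - g x, d⟫ ≤ ‖g (x + t • d) - g x‖ * ‖d‖ :=
              real_inner_le_norm _ _
          _ ≤ (L * ‖(x + t • d) - x‖) * ‖d‖ := by
              have := hlip (x + t • d) x
              gcongr
          _ = L * (|t| * ‖d‖) * ‖d‖ := by rw [add_sub_cancel_left, norm_smul]; norm_num
          _ = L * t * ‖d‖ ^ 2 := by rw [abs_of_pos ht.1]; ring
      linarith
  have h01 : ψ 1 ≤ ψ 0 :=
    hmono (Set.left_mem_Icc.mpr zero_le_one) (Set.right_mem_Icc.mpr zero_le_one) zero_le_one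
  have e0 : ψ 0 = f x := by simp [hψ]
  have e1 : ψ 1 = f w - ⟪g x, d⟫ - L / 2 * ‖d‖ ^ 2 := by
    simp [hψ, hd]
  rw [e0, e1] at h01
  linarith

/-- Lemma 2.4(iii): φ_Γ is level bounded iff Φ is level bounded. -/
theorem fbe_level_bounded_iff
    (f : ∀ i, E i → ℝ) (f' : ∀ i, E i → E i) (L γ : Fin N → ℝ)
    (G : PiLp 2 E → EReal)
    (hf : ∀ i (u : E i), HasGradientAt (f i) (f' i u) u)
    (hL : ∀ i, 0 ≤ L i)
    (hlip : ∀ i (u v : E i), ‖f' i u - f' i v‖ ≤ L i * ‖u - v‖)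
    (hγ : ∀ i, 0 < γ i) (hγL : ∀ i, γ i * L i < (N : ℝ))
    (hGlsc : LowerSemicontinuous G)
    (hGproper : ∃ w, G w ≠ ⊤) (hGbot : ∀ w, G w ≠ ⊥)
    (hargmin : ∃ xs : PiLp 2 E, ∀ w, Phi f G xs ≤ Phi f G w)
    (φ : PiLp 2 E → ℝ)
    (hφ : ∀ x, ((φ x : ℝ) : EReal) = ⨅ w, Mdl f f' γ G w x)
    :
    (∀ α : ℝ, Bornology.IsBounded {x : PiLp 2 E | φ x ≤ α}) ↔
      (∀ α : ℝ, Bornology.IsBounded {x : PiLp 2 E | Phi f G x ≤ ((α : ℝ) : EReal)}) := by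
  -- the envelope is below Φ
  have hle : ∀ x, ((φ x : ℝ) : EReal) ≤ Phi f G x := by
    intro x
    rw [hφ x]
    refine le_trans (iInf_le _ x) (le_of_eq ?_)
    unfold Mdl Phi
    congr 2
    simp
  constructor
  · -- φ level bounded → Φ level bounded
    intro h α
    refine (h α).subset fun x hx => ?_
    simp only [Set.mem_setOf_eq] at hx ⊢
    exact EReal.coe_le_coe_iff.mp (le_trans (hle x) hx)
  · -- Φ level bounded → φ level bounded
    intro h α
    rcases Nat.eq_zero_or_pos N with hN | hN
    · -- trivial case: the space is a subsingleton
      haveI : IsEmpty (Fin N) := by rw [hN]; infer_instance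
      haveI : Subsingleton (PiLp 2 E) :=
        ⟨fun a b => PiLp.ext fun i => isEmptyElim i⟩
      refine (Metric.isBounded_closedBall (x := (0 : PiLp 2 E)) (r := 0)).subset ?_
      intro x _
      simp [Subsingleton.elim x 0]
    have hNpos : (0 : ℝ) < N := by exact_mod_cast hN
    haveI : Nonempty (Fin N) := ⟨⟨0, hN⟩⟩
    -- the modulus of strong positivity
    set c : ℝ := Finset.univ.inf' Finset.univ_nonempty
      (fun i => 2⁻¹ * ((γ i)⁻¹ - L i / N)) with hc
    have hci : ∀ i, (0:ℝ) < 2⁻¹ * ((γ i)⁻¹ - L i / N) := by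
      intro i
      have h1 : L i / N < (γ i)⁻¹ := by
        rw [div_lt_iff₀ hNpos, inv_mul_eq_div, lt_div_iff₀ (hγ i)]
        linarith [hγL i]
      have h2 : 0 < (γ i)⁻¹ - L i / N := sub_pos.mpr h1
      linarith
    have hcpos : 0 < c := by
      rw [hc, Finset.lt_inf'_iff]
      exact fun i _ => hci i
    have hcle : ∀ i, c ≤ 2⁻¹ * ((γ i)⁻¹ - L i / N) := by
      intro i; exact Finset.inf'_le _ (Finset.mem_univ i)
    -- key lower bound on the model
    have key : ∀ w x : PiLp 2 E,
        Phi f G w + ((c * ‖w - x‖ ^ 2 : ℝ) : EReal) ≤ Mdl f f' γ G w x := by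
      intro w x
      have hreal : Fsum f w + c * ‖w - x‖ ^ 2 ≤
          Fsum f x + (N : ℝ)⁻¹ * ∑ i, ⟪f' i (x i), w i - x i⟫
            + 2⁻¹ * ∑ i, (γ i)⁻¹ * ‖w i - x i‖ ^ 2 := by
        have hnorm : ‖w - x‖ ^ 2 = ∑ i, ‖w i - x i‖ ^ 2 := by
          simpa using PiLp.norm_sq_eq_of_L2 E (w - x)
        have hsum : ∑ i, ((N:ℝ)⁻¹ * f i (w i) + c * ‖w i - x i‖ ^ 2)
            ≤ ∑ i, ((N:ℝ)⁻¹ * f i (x i) + (N:ℝ)⁻¹ * ⟪f' i (x i), w i - x i⟫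
              + 2⁻¹ * ((γ i)⁻¹ * ‖w i - x i‖ ^ 2)) := by
          refine Finset.sum_le_sum fun i _ => ?_
          have hdesc := descent_lemma (f i) (f' i) (L i) (hL i) (hf i) (hlip i) (x i) (w i)
          have hc' := hcle i
          have hs : (0:ℝ) ≤ ‖w i - x i‖ ^ 2 := by positivity
          have hNinv : (0:ℝ) ≤ (N : ℝ)⁻¹ := by positivity
          have hmul : (N : ℝ)⁻¹ * f i (w i) ≤ (N : ℝ)⁻¹ * (f i (x i)
              + ⟪f' i (x i), w i - x i⟫ + L i / 2 * ‖w i - x i‖ ^ 2) :=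
            mul_le_mul_of_nonneg_left hdesc hNinv
          have hcs : c * ‖w i - x i‖ ^ 2 ≤ (2⁻¹ * ((γ i)⁻¹ - L i / N)) * ‖w i - x i‖ ^ 2 :=
            mul_le_mul_of_nonneg_right hc' hs
          have hLN : (N : ℝ)⁻¹ * (L i / 2 * ‖w i - x i‖ ^ 2)
              = (L i / N) / 2 * ‖w i - x i‖ ^ 2 := by
            field_simp
          nlinarith [hmul, hcs]
        simp only [Finset.sum_add_distrib, ← Finset.mul_sum] at hsum
        unfold Fsum
        rw [hnorm]
        linarith [hsum]
      calc Phi f G w + ((c * ‖w - x‖ ^ 2 : ℝ) : EReal)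
          = ((Fsum f w + c * ‖w - x‖ ^ 2 : ℝ) : EReal) + G w := by
            unfold Phi
            rw [EReal.coe_add]
            exact add_right_comm _ _ _
        _ ≤ Mdl f f' γ G w x := by
            unfold Mdl
            exact add_le_add_left (EReal.coe_le_coe_iff.mpr hreal) _
    -- the minimum value of Φ
    obtain ⟨xs, hxs⟩ := hargmin
    obtain ⟨w0, hw0⟩ := hGproper
    have htop : Phi f G xs ≠ ⊤ := by
      refine ne_top_of_le_ne_top ?_ (hxs w0)
      exact (EReal.add_lt_top (EReal.coe_ne_top _) hw0).ne
    have hbot : Phi f G xs ≠ ⊥ := by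
      unfold Phi
      rw [ne_eq, EReal.add_eq_bot_iff]
      push_neg
      exact ⟨EReal.coe_ne_bot _, hGbot xs⟩
    set m : ℝ := (Phi f G xs).toReal with hmdef
    have hm : Phi f G xs = (m : EReal) := (EReal.coe_toReal htop hbot).symm
    -- the bounded sublevel set of Φ
    obtain ⟨R, hR⟩ := (h (α + 1)).subset_closedBall 0
    set r : ℝ := Real.sqrt ((α + 1 - m) / c) with hr
    refine (Metric.isBounded_closedBall (x := (0 : PiLp 2 E)) (r := R + r)).subset ?_
    intro x hx
    simp only [Set.mem_setOf_eq] at hx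
    have h1 : (⨅ w, Mdl f f' γ G w x) < ((α + 1 : ℝ) : EReal) := by
      rw [← hφ x]
      exact lt_of_le_of_lt (EReal.coe_le_coe_iff.mpr hx)
        (EReal.coe_lt_coe_iff.mpr (by linarith))
    obtain ⟨w, hw⟩ := iInf_lt_iff.mp h1
    have hkey := lt_of_le_of_lt (key w x) hw
    have hq0 : (0 : EReal) ≤ ((c * ‖w - x‖ ^ 2 : ℝ) : EReal) := by
      exact_mod_cast (by positivity : (0:ℝ) ≤ c * ‖w - x‖ ^ 2)
    have hwS : Phi f G w ≤ ((α + 1 : ℝ) : EReal) := by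
      refine le_of_lt (lt_of_le_of_lt ?_ hkey)
      nth_rewrite 1 [← add_zero (Phi f G w)]
      exact add_le_add_right hq0 _
    have hwball : ‖w‖ ≤ R := by
      have := hR hwS
      simpa [Metric.mem_closedBall] using this
    have h2 : ((m + c * ‖w - x‖ ^ 2 : ℝ) : EReal) < ((α + 1 : ℝ) : EReal) := by
      rw [EReal.coe_add]
      refine lt_of_le_of_lt ?_ hkey
      have hmle : (m : EReal) ≤ Phi f G w := by rw [← hm]; exact hxs w
      exact add_le_add_left hmle _
    have h3 : m + c * ‖w - x‖ ^ 2 < α + 1 := EReal.coe_lt_coe_iff.mp h2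
    have h4 : ‖w - x‖ ≤ r := by
      rw [hr]
      rw [Real.le_sqrt (norm_nonneg _)]
      rw [le_div_iff₀ hcpos]
      · nlinarith
      · have h6 : (0:ℝ) ≤ c * ‖w - x‖ ^ 2 := by positivity
        have h7 : (0:ℝ) ≤ α + 1 - m := by linarith
        positivity
    have h5 : ‖x‖ ≤ R + r := by
      calc ‖x‖ = ‖w + (x - w)‖ := by congr 1; abel
        _ ≤ ‖w‖ + ‖x - w‖ := norm_add_le _ _
        _ ≤ R + r := by
            rw [norm_sub_rev]
            exact add_le_add hwball h4
    simpa [Metric.mem_closedBall] using h5
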